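/- arXiv:2511.08831 — 2 statements merged into one kernel-verified Lean document; each statement's English description precedes it below -/
import Mathlib

section
/- If V : ℝⁿ → ℝ is continuously differentiable, V(0) = 0, V(x) > 0 for all x ≠ 0 in an open neighborhood U of 0, and the derivative of V along every solution of ẋ = f(x) is strictly negative on U \ {0} (i.e. ⟨∇V(x), f(x)⟩ < 0 for all x ∈ U, x ≠ 0), with f locally Lipschitz and f(0) = 0, then the origin is an asymptotically stable equilibrium of ẋ = f(x). -/
open scoped RealInnerProductSpace Topology
open Filter

section Aux

open Metric Set

variable {E : Type*} [NormedAddCommGroup E] [InnerProductSpace ℝ E] [CompleteSpace E]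

private lemma lyap_deriv_along {V : E → ℝ} (hV : ContDiff ℝ 1 V)
    {f : E → E} {x : ℝ → E} (hx : ∀ t, HasDerivAt x (f (x t)) t) (t : ℝ) :
    HasDerivAt (fun s => V (x s)) ⟪gradient V (x t), f (x t)⟫ t := by
  have h1 : HasGradientAt V (gradient V (x t)) (x t) :=
    (hV.differentiable one_ne_zero (x t)).hasGradientAt
  have h2 := h1.hasFDerivAt.comp_hasDerivAt t (hx t)
  simpa [InnerProductSpace.toDual_apply_apply, Function.comp_def] using h2

private lemma lyap_nonpos {V : E → ℝ} {f : E → E} (hf0 : f 0 = 0)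
    {U : Set E} (hV_dec : ∀ y ∈ U, y ≠ 0 → ⟪gradient V y, f y⟫ < 0)
    {y : E} (hy : y ∈ U) : ⟪gradient V y, f y⟫ ≤ 0 := by
  rcases eq_or_ne y 0 with rfl | hne
  · simp [hf0]
  · exact (hV_dec y hy hne).le

variable [FiniteDimensional ℝ E]

/-- stability core: solutions starting close enough stay in the ball of radius `r`. -/
private lemma lyap_core [Nontrivial E] {f : E → E} {V : E → ℝ}
    (hf0 : f 0 = 0) {U : Set E} {r : ℝ} (hr : 0 < r) (hU : closedBall 0 r ⊆ U)
    (hV : ContDiff ℝ 1 V) (hV0 : V 0 = 0)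
    (hV_pos : ∀ y ∈ U, y ≠ 0 → 0 < V y)
    (hV_dec : ∀ y ∈ U, y ≠ 0 → ⟪gradient V y, f y⟫ < 0) :
    ∃ δ > 0, δ ≤ r ∧ ∀ x : ℝ → E, (∀ t, HasDerivAt x (f (x t)) t) →
      ‖x 0‖ < δ → ∀ t ≥ 0, ‖x t‖ < r := by
  -- minimum of V on the sphere
  obtain ⟨z, hz, hzmin⟩ : ∃ z ∈ sphere (0 : E) r, IsMinOn V (sphere 0 r) z :=
    (isCompact_sphere 0 r).exists_isMinOn (NormedSpace.sphere_nonempty.2 hr.le)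
      hV.continuous.continuousOn
  have hzU : z ∈ U := hU (sphere_subset_closedBall hz)
  have hzne : z ≠ 0 := by
    intro h
    rw [h] at hz
    simp only [mem_sphere, dist_self] at hz
    exact hr.ne hz
  set m := V z with hm
  have hmpos : 0 < m := hV_pos z hzU hzne
  -- δ from continuity of V at 0
  obtain ⟨δ₀, hδ₀, hδ₀m⟩ : ∃ δ > 0, ∀ y : E, dist y 0 < δ → dist (V y) (V 0) < m := by
    obtain ⟨δ, hδ, h⟩ :=
      Metric.continuousAt_iff.1 (hV.continuous.continuousAt (x := (0:E))) m hmpos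
    exact ⟨δ, hδ, fun y hy => h hy⟩
  refine ⟨min δ₀ r, lt_min hδ₀ hr, min_le_right _ _, ?_⟩
  intro x hx hx0 t ht
  have hxc : Continuous x := continuous_iff_continuousAt.2 fun s => (hx s).continuousAt
  have hVsmall : ∀ y : E, ‖y‖ < δ₀ → V y < m := by
    intro y hy
    have := hδ₀m y (by simpa [dist_zero_right] using hy)
    rw [hV0, dist_zero_right] at this
    exact lt_of_le_of_lt (le_abs_self _) this
  by_contra hcon
  push_neg at hcon
  set A : Set ℝ := {s | 0 ≤ s ∧ r ≤ ‖x s‖} with hA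
  have hAclosed : IsClosed A := by
    have : A = Ici 0 ∩ (fun s => ‖x s‖) ⁻¹' Ici r := rfl
    rw [this]
    exact isClosed_Ici.inter (isClosed_Ici.preimage hxc.norm)
  have hAne : A.Nonempty := ⟨t, ht, hcon⟩
  have hAbdd : BddBelow A := ⟨0, fun s hs => hs.1⟩
  set T := sInf A with hT
  have hTA : T ∈ A := hAclosed.csInf_mem hAne hAbdd
  have hx0r : ‖x 0‖ < r := lt_of_lt_of_le hx0 (min_le_right _ _)
  have hT0 : 0 < T := by
    rcases hTA.1.lt_or_eq with h | h
    · exact h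
    · exact absurd hTA.2 (by rw [← h]; exact not_le.2 hx0r)
  have hlt : ∀ s, 0 ≤ s → s < T → ‖x s‖ < r := by
    intro s hs hsT
    by_contra h
    push_neg at h
    exact absurd (csInf_le hAbdd ⟨hs, h⟩) (not_le.2 hsT)
  have hle : ∀ s ∈ Icc (0 : ℝ) T, ‖x s‖ ≤ r := by
    intro s hs
    rcases hs.2.lt_or_eq with h | h
    · exact (hlt s hs.1 h).le
    · have hTle : ‖x T‖ ≤ r := by
        have htend : Tendsto (fun u => ‖x u‖) (𝓝[<] T) (𝓝 ‖x T‖) :=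
          (hxc.norm.tendsto T).mono_left nhdsWithin_le_nhds
        refine le_of_tendsto htend ?_
        filter_upwards [Ioo_mem_nhdsLT_of_mem (show T ∈ Ioc (0:ℝ) T from ⟨hT0, le_refl _⟩)]
          with u hu
        exact (hlt u hu.1.le hu.2).le
      rw [h]; exact hTle
  have hmemU : ∀ s ∈ Icc (0 : ℝ) T, x s ∈ U := fun s hs =>
    hU (by simpa [mem_closedBall, dist_zero_right] using hle s hs)
  have hanti : AntitoneOn (fun s => V (x s)) (Icc 0 T) := by
    refine antitoneOn_of_deriv_nonpos (convex_Icc 0 T)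
      ((hV.continuous.comp hxc).continuousOn) ?_ ?_
    · intro s hs
      exact (lyap_deriv_along hV hx s).differentiableAt.differentiableWithinAt
    · intro s hs
      rw [interior_Icc] at hs
      rw [(lyap_deriv_along hV hx s).deriv]
      exact lyap_nonpos hf0 hV_dec (hmemU s (Ioo_subset_Icc_self hs))
  have h1 : V (x T) ≤ V (x 0) :=
    hanti (Set.left_mem_Icc.2 hT0.le) (Set.right_mem_Icc.2 hT0.le) hT0.le
  have hxT : x T ∈ sphere (0 : E) r := by
    simp only [mem_sphere, dist_zero_right]
    exact le_antisymm (hle T (Set.right_mem_Icc.2 hT0.le)) hTA.2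
  have h2 : m ≤ V (x T) := hzmin hxT
  have h3 : V (x 0) < m := hVsmall _ (lt_of_lt_of_le hx0 (min_le_left _ _))
  linarith

end Aux

/-- Lyapunov's direct method: if `V` is a strict Lyapunov function on a neighborhood `U`
of the origin, then the origin is an asymptotically stable equilibrium of `ẋ = f x`. -/
theorem lyapunov_asymptotic_stability
    {n : ℕ} (f : EuclideanSpace ℝ (Fin n) → EuclideanSpace ℝ (Fin n))
    (V : EuclideanSpace ℝ (Fin n) → ℝ)
    (hf_lip : LocallyLipschitz f) (hf0 : f 0 = 0)
    (U : Set (EuclideanSpace ℝ (Fin n))) (hU_open : IsOpen U) (hU0 : (0 : EuclideanSpace ℝ (Fin n)) ∈ U)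
    (hV_smooth : ContDiff ℝ 1 V) (hV0 : V 0 = 0)
    (hV_pos : ∀ x ∈ U, x ≠ 0 → 0 < V x)
    (hV_dec : ∀ x ∈ U, x ≠ 0 → ⟪gradient V x, f x⟫ < 0) :
    (∀ ε > 0, ∃ δ > 0, ∀ x : ℝ → EuclideanSpace ℝ (Fin n),
        (∀ t, HasDerivAt x (f (x t)) t) → ‖x 0‖ < δ → ∀ t ≥ 0, ‖x t‖ < ε) ∧
    (∃ δ > 0, ∀ x : ℝ → EuclideanSpace ℝ (Fin n),
        (∀ t, HasDerivAt x (f (x t)) t) → ‖x 0‖ < δ →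
        Tendsto x atTop (nhds 0)) := by
  rcases subsingleton_or_nontrivial (EuclideanSpace ℝ (Fin n)) with hsub | hnt
  · constructor
    · intro ε hε
      refine ⟨1, one_pos, fun x _ _ t _ => ?_⟩
      have : x t = 0 := Subsingleton.elim _ _
      simpa [this] using hε
    · refine ⟨1, one_pos, fun x _ _ => ?_⟩
      have : x = fun _ => (0 : EuclideanSpace ℝ (Fin n)) :=
        funext fun t => Subsingleton.elim _ _
      rw [this]
      exact tendsto_const_nhds
  -- choose r with closedBall 0 r ⊆ U
  obtain ⟨ε₀, hε₀, hball⟩ := Metric.isOpen_iff.1 hU_open 0 hU0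
  set r := ε₀ / 2 with hrdef
  have hr : 0 < r := half_pos hε₀
  have hrU : Metric.closedBall (0 : EuclideanSpace ℝ (Fin n)) r ⊆ U :=
    (Metric.closedBall_subset_ball (by linarith)).trans hball
  constructor
  · -- stability
    intro ε hε
    have hr' : 0 < min r (ε / 2) := lt_min hr (half_pos hε)
    have hrU' : Metric.closedBall (0 : EuclideanSpace ℝ (Fin n)) (min r (ε / 2)) ⊆ U :=
      (Metric.closedBall_subset_closedBall (min_le_left _ _)).trans hrU
    obtain ⟨δ, hδ, _, hδs⟩ := lyap_core hf0 hr' hrU' hV_smooth hV0 hV_pos hV_dec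
    refine ⟨δ, hδ, fun x hx hx0 t ht => ?_⟩
    exact lt_of_lt_of_le (hδs x hx hx0 t ht)
      ((min_le_right _ _).trans (by linarith))
  · -- attractivity
    obtain ⟨δ, hδ, hδr, hδs⟩ := lyap_core hf0 hr hrU hV_smooth hV0 hV_pos hV_dec
    refine ⟨δ, hδ, fun x hx hx0 => ?_⟩
    have hxc : Continuous x := continuous_iff_continuousAt.2 fun s => (hx s).continuousAt
    have hstay : ∀ t ≥ 0, ‖x t‖ < r := hδs x hx hx0
    have hmemU : ∀ t ≥ 0, x t ∈ U := fun t ht =>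
      hrU (by simpa [Metric.mem_closedBall, dist_zero_right] using (hstay t ht).le)
    -- V ∘ x is antitone on [0, ∞)
    have hanti : AntitoneOn (fun s => V (x s)) (Set.Ici 0) := by
      refine antitoneOn_of_deriv_nonpos (convex_Ici 0)
        ((hV_smooth.continuous.comp hxc).continuousOn) ?_ ?_
      · intro s _
        exact (lyap_deriv_along hV_smooth hx s).differentiableAt.differentiableWithinAt
      · intro s hs
        rw [interior_Ici] at hs
        rw [(lyap_deriv_along hV_smooth hx s).deriv]
        exact lyap_nonpos hf0 hV_dec (hmemU s (le_of_lt hs))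
    -- key claim: V ∘ x gets below any positive bound
    have hkey : ∀ b > 0, ∃ t₀ ≥ (0:ℝ), V (x t₀) < b := by
      intro b hb
      by_contra hcon
      push_neg at hcon
      -- continuity: a radius below which V < b
      obtain ⟨ρ₀, hρ₀, hρ₀b⟩ :
          ∃ ρ > 0, ∀ y : EuclideanSpace ℝ (Fin n), dist y 0 < ρ → dist (V y) (V 0) < b := by
        obtain ⟨ρ, hρ, h⟩ := Metric.continuousAt_iff.1
          (hV_smooth.continuous.continuousAt (x := (0 : EuclideanSpace ℝ (Fin n)))) b hb
        exact ⟨ρ, hρ, fun y hy => h hy⟩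
      set ρ := min ρ₀ r with hρdef
      have hρ : 0 < ρ := lt_min hρ₀ hr
      have hfar : ∀ t ≥ (0:ℝ), ρ ≤ ‖x t‖ := by
        intro t ht
        by_contra h
        push_neg at h
        have := hρ₀b (x t) (by
          rw [dist_zero_right]; exact lt_of_lt_of_le h (min_le_left _ _))
        rw [hV0, dist_zero_right] at this
        exact absurd (lt_of_le_of_lt (le_abs_self _) this) (not_lt.2 (hcon t ht))
      -- compact annulus
      set K : Set (EuclideanSpace ℝ (Fin n)) := {y | ρ ≤ ‖y‖} ∩ Metric.closedBall 0 r with hK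
      have hKcomp : IsCompact K := by
        apply (isCompact_closedBall (0 : EuclideanSpace ℝ (Fin n)) r).inter_left
        have : {y : EuclideanSpace ℝ (Fin n) | ρ ≤ ‖y‖}
            = (fun y : EuclideanSpace ℝ (Fin n) => ‖y‖) ⁻¹' Set.Ici ρ := rfl
        rw [this]
        exact isClosed_Ici.preimage continuous_norm
      have hxK : ∀ t ≥ (0:ℝ), x t ∈ K := fun t ht =>
        ⟨hfar t ht, by simpa [Metric.mem_closedBall, dist_zero_right] using (hstay t ht).le⟩
      have hKne : K.Nonempty := ⟨x 0, hxK 0 le_rfl⟩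
      -- continuous function W
      set W : EuclideanSpace ℝ (Fin n) → ℝ := fun y => ⟪gradient V y, f y⟫ with hWdef
      have hgradcont : Continuous fun y : EuclideanSpace ℝ (Fin n) => gradient V y := by
        have h1 : Continuous fun y : EuclideanSpace ℝ (Fin n) => fderiv ℝ V y :=
          hV_smooth.continuous_fderiv one_ne_zero
        exact ((InnerProductSpace.toDual ℝ (EuclideanSpace ℝ (Fin n))).symm.continuous.comp h1 : _)
      have hWcont : Continuous W := hgradcont.inner hf_lip.continuous
      obtain ⟨z, hzK, hzmax⟩ := hKcomp.exists_isMaxOn hKne hWcont.continuousOn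
      have hzU : z ∈ U := hrU hzK.2
      have hzne : z ≠ 0 := fun h => by
        have := hzK.1
        rw [h] at this
        simp only [Set.mem_setOf_eq, norm_zero] at this
        exact absurd this (not_le.2 hρ)
      set k := -W z with hk
      have hkpos : 0 < k := neg_pos.2 (hV_dec z hzU hzne)
      -- h s = V (x s) + k s is antitone on [0, ∞)
      have hderiv : ∀ s : ℝ, HasDerivAt (fun u => V (x u) + k * u) (W (x s) + k) s := by
        intro s
        exact (lyap_deriv_along hV_smooth hx s).add
          (by simpa using (hasDerivAt_id s).const_mul k)
      have hanti2 : AntitoneOn (fun u => V (x u) + k * u) (Set.Ici 0) := by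
        refine antitoneOn_of_deriv_nonpos (convex_Ici 0)
          (((hV_smooth.continuous.comp hxc).add
            (continuous_const.mul continuous_id)).continuousOn) ?_ ?_
        · intro s _
          exact (hderiv s).differentiableAt.differentiableWithinAt
        · intro s hs
          rw [interior_Ici] at hs
          rw [(hderiv s).deriv]
          have hle : W (x s) ≤ W z := hzmax (hxK s hs.le)
          rw [hk] at *
          linarith
      set T := V (x 0) / k + 1 with hTdef
      have hVx0 : 0 < V (x 0) := lt_of_lt_of_le hb (hcon 0 le_rfl)
      have hTpos : 0 < T := by positivity
      have h1 : V (x T) + k * T ≤ V (x 0) + k * 0 :=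
        hanti2 Set.self_mem_Ici (Set.mem_Ici.2 hTpos.le) hTpos.le
      have hkT : k * T = V (x 0) + k := by
        rw [hTdef]; field_simp
      have h2 : b ≤ V (x T) := hcon T hTpos.le
      rw [hkT] at h1
      linarith
    -- conclude tendsto
    rw [Metric.tendsto_atTop]
    intro ε hε
    set ε' := min ε r with hε'def
    have hε' : 0 < ε' := lt_min hε hr
    set K' : Set (EuclideanSpace ℝ (Fin n)) := {y | ε' ≤ ‖y‖} ∩ Metric.closedBall 0 r with hK'
    rcases K'.eq_empty_or_nonempty with hKe | hKne
    · refine ⟨0, fun t ht => ?_⟩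
      rw [dist_zero_right]
      by_contra h
      push_neg at h
      have : x t ∈ K' := ⟨(min_le_left _ _).trans h,
        by simpa [Metric.mem_closedBall, dist_zero_right] using (hstay t ht).le⟩
      rw [hKe] at this
      exact this
    · have hK'comp : IsCompact K' := by
        apply (isCompact_closedBall (0 : EuclideanSpace ℝ (Fin n)) r).inter_left
        have : {y : EuclideanSpace ℝ (Fin n) | ε' ≤ ‖y‖}
            = (fun y : EuclideanSpace ℝ (Fin n) => ‖y‖) ⁻¹' Set.Ici ε' := rfl
        rw [this]
        exact isClosed_Ici.preimage continuous_norm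
      obtain ⟨z, hzK, hzmin⟩ := hK'comp.exists_isMinOn hKne hV_smooth.continuous.continuousOn
      have hzU : z ∈ U := hrU hzK.2
      have hzne : z ≠ 0 := fun h => by
        have := hzK.1
        rw [h] at this
        simp only [Set.mem_setOf_eq, norm_zero] at this
        exact absurd this (not_le.2 hε')
      have hm' : 0 < V z := hV_pos z hzU hzne
      obtain ⟨t₀, ht₀, hVt₀⟩ := hkey (V z) hm'
      refine ⟨t₀, fun t ht => ?_⟩
      have ht0 : (0:ℝ) ≤ t := ht₀.trans ht
      have hVt : V (x t) ≤ V (x t₀) := hanti (Set.mem_Ici.2 ht₀) (Set.mem_Ici.2 ht0) ht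
      have hnotK : x t ∉ K' := by
        intro hmem
        have : V z ≤ V (x t) := hzmin hmem
        linarith
      rw [dist_zero_right]
      by_contra h
      push_neg at h
      exact hnotK ⟨(min_le_left _ _).trans h,
        by simpa [Metric.mem_closedBall, dist_zero_right] using (hstay t ht0).le⟩
end

section
/- Suppose V : ℝⁿ → ℝ satisfies the hypotheses of Zubov's theorem on an open set D containing the origin: V is continuously differentiable, V(0) = 0, 0 < V(x) < 1 for all x ∈ D \ {0}, ⟨∇V(x), f(x)⟩ = −h(x)(1 − V(x)) with h continuous, h(0) = 0, h > 0 away from 0, and V(x) → 1 as x → ∂D. Then D is positively invariant for ẋ = f(x): every solution starting in D remains in D for all forward times in its interval of existence. -/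
open scoped RealInnerProductSpace
open Filter

/-- Under the hypotheses of Zubov's theorem on an open set `D` containing the origin,
`D` is positively invariant: solutions starting in `D` remain in `D` for all forward
times in their interval of existence. -/
theorem zubov_domain_positively_invariant
    {n : ℕ} (f : EuclideanSpace ℝ (Fin n) → EuclideanSpace ℝ (Fin n))
    (hf_lip : LocallyLipschitz f) (hf0 : f 0 = 0)
    (V h : EuclideanSpace ℝ (Fin n) → ℝ)
    (hV_smooth : ContDiff ℝ 1 V) (hV0 : V 0 = 0)
    (D : Set (EuclideanSpace ℝ (Fin n))) (hD_open : IsOpen D)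
    (hD0 : (0 : EuclideanSpace ℝ (Fin n)) ∈ D)
    (hV_range : ∀ x ∈ D, x ≠ 0 → 0 < V x ∧ V x < 1)
    (hh_cont : Continuous h) (hh0 : h 0 = 0) (hh_pos : ∀ x, x ≠ 0 → 0 < h x)
    (hZubov : ∀ x ∈ D, ⟪gradient V x, f x⟫ = -h x * (1 - V x))
    (hV_boundary : ∀ y ∈ frontier D, Tendsto V (nhdsWithin y D) (nhds 1)) :
    ∀ (T : ℝ) (x : ℝ → EuclideanSpace ℝ (Fin n)),
      (∀ t ∈ Set.Ico (0 : ℝ) T, HasDerivAt x (f (x t)) t) →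
      x 0 ∈ D → ∀ t ∈ Set.Ico (0 : ℝ) T, x t ∈ D := by
  intro T x hx hx0
  by_contra hcon
  push_neg at hcon
  obtain ⟨t0, ht0, hxt0⟩ := hcon
  -- basic facts
  have hVlt : ∀ y ∈ D, V y < 1 := by
    intro y hy
    by_cases hy0 : y = 0
    · simp [hy0, hV0]
    · exact (hV_range y hy hy0).2
  have hhnn : ∀ y, 0 ≤ h y := by
    intro y
    by_cases hy0 : y = 0
    · simp [hy0, hh0]
    · exact (hh_pos y hy0).le
  set B : Set ℝ := {t | t ∈ Set.Ico (0:ℝ) T ∧ x t ∉ D} with hBdef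
  have hB0 : t0 ∈ B := ⟨ht0, hxt0⟩
  have hBne : B.Nonempty := ⟨t0, hB0⟩
  have hBbdd : BddBelow B := ⟨0, fun b hb => hb.1.1⟩
  set τ := sInf B with hτdef
  have hτ_le : τ ≤ t0 := csInf_le hBbdd hB0
  have hτT : τ < T := lt_of_le_of_lt hτ_le ht0.2
  have hτ0 : 0 ≤ τ := le_csInf hBne (fun b hb => hb.1.1)
  have hT0 : (0:ℝ) < T := lt_of_le_of_lt ht0.1 ht0.2
  -- τ > 0
  have hc0 : ContinuousAt x 0 := (hx 0 ⟨le_rfl, hT0⟩).continuousAt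
  have hev : ∀ᶠ s in nhds (0:ℝ), x s ∈ D := hc0.preimage_mem_nhds (hD_open.mem_nhds hx0)
  obtain ⟨ε, hε, hball⟩ := Metric.eventually_nhds_iff.mp hev
  have hτpos : 0 < τ := by
    refine lt_of_lt_of_le hε (le_csInf hBne ?_)
    intro b hb
    by_contra hlt
    push_neg at hlt
    exact hb.2 (hball (by rw [Real.dist_eq]; rw [abs_of_nonneg (by simpa using hb.1.1)]; simpa using hlt))
  -- x s ∈ D for s ∈ [0, τ)
  have hxD : ∀ s ∈ Set.Ico (0:ℝ) τ, x s ∈ D := by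
    intro s hs
    by_contra hsD
    have hsB : s ∈ B := ⟨⟨hs.1, lt_trans hs.2 hτT⟩, hsD⟩
    exact absurd (csInf_le hBbdd hsB) (not_le.mpr hs.2)
  -- W = V ∘ x has derivative -h(x s)(1 - V(x s)) when x s ∈ D
  have hVdiff := hV_smooth.differentiable one_ne_zero
  have hW : ∀ s ∈ Set.Ico (0:ℝ) T, x s ∈ D →
      HasDerivAt (fun t => V (x t)) (-h (x s) * (1 - V (x s))) s := by
    intro s hs hsD
    have hg := (hVdiff (x s)).hasGradientAt
    have := hg.hasFDerivAt.comp_hasDerivAt s (hx s hs)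
    have heq : (InnerProductSpace.toDual ℝ _ (gradient V (x s))) (f (x s))
        = -h (x s) * (1 - V (x s)) := by
      rw [InnerProductSpace.toDual_apply_apply]
      exact hZubov (x s) hsD
    rw [heq] at this
    exact this
  -- W is antitone on [0, τ]
  have hIcc_sub : Set.Icc (0:ℝ) τ ⊆ Set.Ico (0:ℝ) T :=
    fun s hs => ⟨hs.1, lt_of_le_of_lt hs.2 hτT⟩
  have hWcont : ContinuousOn (fun t => V (x t)) (Set.Icc (0:ℝ) τ) := by
    intro s hs
    exact (((hVdiff (x s)).continuousAt).comp (hx s (hIcc_sub hs)).continuousAt).continuousWithinAt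
  have hWanti : AntitoneOn (fun t => V (x t)) (Set.Icc (0:ℝ) τ) := by
    have hint : interior (Set.Icc (0:ℝ) τ) = Set.Ioo 0 τ := interior_Icc
    refine antitoneOn_of_deriv_nonpos (convex_Icc _ _) hWcont ?_ ?_
    · intro s hs
      rw [hint] at hs
      exact ((hW s (hIcc_sub ⟨hs.1.le, hs.2.le⟩) (hxD s ⟨hs.1.le, hs.2⟩)).differentiableAt).differentiableWithinAt
    · intro s hs
      rw [hint] at hs
      rw [(hW s (hIcc_sub ⟨hs.1.le, hs.2.le⟩) (hxD s ⟨hs.1.le, hs.2⟩)).deriv]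
      have h1 : 0 ≤ 1 - V (x s) := by
        have := hVlt (x s) (hxD s ⟨hs.1.le, hs.2⟩)
        linarith
      have h2 := hhnn (x s)
      nlinarith
  -- the filter approaching τ from the left is nontrivial
  have hne : (nhdsWithin τ (Set.Ico (0:ℝ) τ)).NeBot := by
    rw [← mem_closure_iff_nhdsWithin_neBot, closure_Ico (ne_of_lt hτpos)]
    exact ⟨hτ0, le_rfl⟩
  have hct : ContinuousAt x τ := (hx τ ⟨hτ0, hτT⟩).continuousAt
  have hten : Tendsto x (nhdsWithin τ (Set.Ico (0:ℝ) τ)) (nhds (x τ)) :=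
    hct.tendsto.mono_left nhdsWithin_le_nhds
  have hevD : ∀ᶠ s in nhdsWithin τ (Set.Ico (0:ℝ) τ), x s ∈ D :=
    eventually_mem_nhdsWithin.mono (fun s hs => hxD s hs)
  have hclos : x τ ∈ closure D := mem_closure_of_tendsto hten hevD
  -- x τ ∉ D
  have hxτD : x τ ∉ D := by
    intro hmemD
    have hevτ : ∀ᶠ s in nhds τ, x s ∈ D := hct.preimage_mem_nhds (hD_open.mem_nhds hmemD)
    obtain ⟨δ, hδ, hballτ⟩ := Metric.eventually_nhds_iff.mp hevτ
    obtain ⟨b, hbB, hbδ⟩ := (csInf_lt_iff hBbdd hBne).mp (show sInf B < τ + δ by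
      rw [← hτdef]; linarith)
    have hτb : τ ≤ b := csInf_le hBbdd hbB
    exact hbB.2 (hballτ (by rw [Real.dist_eq, abs_of_nonneg (by linarith)]; linarith))
  -- so x τ ∈ frontier D
  have hfront : x τ ∈ frontier D := by
    rw [frontier, hD_open.interior_eq]
    exact ⟨hclos, hxτD⟩
  -- V ∘ x → 1 from the left, but V ∘ x ≤ V (x 0) < 1, contradiction
  have htend1 : Tendsto (fun s => V (x s)) (nhdsWithin τ (Set.Ico (0:ℝ) τ)) (nhds 1) := by
    refine (hV_boundary (x τ) hfront).comp ?_
    rw [tendsto_nhdsWithin_iff]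
    exact ⟨hten, hevD⟩
  have hub : ∀ᶠ s in nhdsWithin τ (Set.Ico (0:ℝ) τ), V (x s) ≤ V (x 0) :=
    eventually_mem_nhdsWithin.mono (fun s hs =>
      hWanti ⟨le_rfl, hτ0⟩ ⟨hs.1, hs.2.le⟩ hs.1)
  have h1le : (1:ℝ) ≤ V (x 0) := le_of_tendsto htend1 hub
  exact absurd h1le (not_le.mpr (hVlt (x 0) hx0))
end
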